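/- arXiv:1303.1366 — 4 statements merged into one kernel-verified Lean document; each statement's English description precedes it below -/
import Mathlib

section
/- Let m ≥ 1 and 0 ≤ j ≤ m be integers. Then the following identity holds in ℤ⟦X⟧: (Σ_{n≥0} F_{mn+j} X^n) · (1 − L_m·X + (−1)^m·X²) = F_j + (−1)^j·F_{m−j}·X. -/
open PowerSeries

/-- The Lucas numbers: `L 0 = 2`, `L 1 = 1`, `L (n+2) = L (n+1) + L n`. -/
def lucas : ℕ → ℕ
  | 0 => 2
  | 1 => 1
  | n + 2 => lucas (n + 1) + lucas n

lemma lucas_eq_fib (n : ℕ) : lucas (n + 1) = Nat.fib (n + 2) + Nat.fib n := by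
  induction n using Nat.twoStepInduction with
  | zero => rfl
  | one => rfl
  | more n ih1 ih2 =>
    show lucas (n + 2) + lucas (n + 1) = _
    rw [ih1, ih2, Nat.fib_add_two (n := n + 2), Nat.fib_add_two (n := n)]
    ring

/-- d'Ocagne-type identity. -/
lemma fib_docagne (k l : ℕ) :
    (Nat.fib (k + l + 1) : ℤ) * Nat.fib l - Nat.fib (k + l) * Nat.fib (l + 1) =
      (-1) ^ (l + 1) * Nat.fib k := by
  induction l with
  | zero => simp
  | succ l ih =>
    have h1 : k + (l + 1) + 1 = (k + l) + 2 := by ring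
    have h2 : k + (l + 1) = (k + l) + 1 := by ring
    rw [h1, h2, Nat.fib_add_two (n := k + l), Nat.fib_add_two (n := l)]
    push_cast
    linear_combination -ih

lemma fib_rec (m k : ℕ) (hm : 1 ≤ m) :
    (Nat.fib (k + 2 * m) : ℤ) = lucas m * Nat.fib (k + m) - (-1) ^ m * Nat.fib k := by
  obtain ⟨l, rfl⟩ := Nat.exists_eq_add_of_le hm
  have h1 : k + 2 * (1 + l) = (k + l) + (l + 1) + 1 := by ring
  have h2 : k + (1 + l) = k + l + 1 := by ring
  have h3 : 1 + l = l + 1 := by ring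
  rw [h1, h2, h3, Nat.fib_add, lucas_eq_fib]
  have := fib_docagne k l
  push_cast
  linear_combination -this

lemma fib_init (m j : ℕ) (hm : 1 ≤ m) (hj : j ≤ m) :
    (Nat.fib (m + j) : ℤ) = lucas m * Nat.fib j + (-1) ^ j * Nat.fib (m - j) := by
  obtain ⟨d, rfl⟩ := Nat.exists_eq_add_of_le hj
  rcases j with _ | i
  · simp
  · have h1 : (i + 1) + d + (i + 1) = (d + i) + (i + 1) + 1 := by ring
    have h2 : i + 1 + d - (i + 1) = d := by omega
    have h3 : i + 1 + d = (d + i) + 1 := by ring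
    rw [h1, h2, h3, Nat.fib_add, lucas_eq_fib]
    have h := fib_docagne d (i + 1)
    have h4 : d + (i + 1) = d + i + 1 := by ring
    rw [h4] at h
    have e1 : d + i + 1 + 1 = d + i + 2 := rfl
    have e2 : i + 1 + 1 = i + 2 := rfl
    rw [e1, e2] at h
    push_cast
    linear_combination -h

theorem fib_multisection_gf (m j : ℕ) (hm : 1 ≤ m) (hj : j ≤ m) :
    (PowerSeries.mk fun n => (Nat.fib (m * n + j) : ℤ)) *
        (1 - C (R := ℤ) (lucas m) * X + C (R := ℤ) ((-1) ^ m) * X ^ 2) =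
      C (R := ℤ) (Nat.fib j) + C (R := ℤ) ((-1) ^ j * Nat.fib (m - j)) * X := by
  set φ : PowerSeries ℤ := PowerSeries.mk fun n => (Nat.fib (m * n + j) : ℤ) with hφ
  have key : φ * (1 - C (R := ℤ) (lucas m) * X + C (R := ℤ) ((-1) ^ m) * X ^ 2) =
      φ - C (R := ℤ) (lucas m) * (φ * X) + C (R := ℤ) ((-1) ^ m) * (φ * X * X) := by
    ring
  rw [key]
  ext n
  rcases n with _ | _ | n
  · simp [hφ, coeff_zero_mul_X]
  · simp only [map_add, map_sub, coeff_succ_mul_X, coeff_zero_mul_X, coeff_C_mul,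
      hφ, coeff_mk, coeff_one, coeff_C, if_neg (one_ne_zero), if_pos rfl, mul_zero]
    rw [show m * (0 + 1) + j = m + j by ring, show 0 + j = j by ring,
      fib_init m j hm hj]
    norm_num
  · simp only [map_add, map_sub, coeff_succ_mul_X, coeff_C_mul, hφ, coeff_mk,
      coeff_one, coeff_C]
    have hr := fib_rec m (m * n + j) hm
    have he : m * n + j + 2 * m = m * (n + 2) + j := by ring
    have he2 : m * n + j + m = m * (n + 1) + j := by ring
    rw [he, he2] at hr
    rw [hr]
    norm_num
end

section
/- For every integer n ≥ 1, F_{2n−2} equals the sum, over all compositions (a_1, …, a_k) of n, of the products (2^{a_1−1} − 1)(2^{a_2−1} − 1) ⋯ (2^{a_k−1} − 1). -/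
open Finset

/-- prepend a block of size `i+1` -/
def compCons (n : ℕ) (i : Fin (n + 1)) (c : Composition (n - i)) : Composition (n + 1) :=
  ⟨(i + 1) :: c.blocks,
   by intro j hj; rcases List.mem_cons.1 hj with h | h
      · omega
      · exact c.blocks_pos h,
   by simp [c.blocks_sum]; omega⟩

def compSplit (n : ℕ) (c : Composition (n + 1)) : Σ i : Fin (n + 1), Composition (n - i) :=
  match h : c.blocks with
  | [] => absurd c.blocks_sum (by simp [h])
  | b :: l =>
      have hb : 0 < b := c.blocks_pos (h ▸ List.mem_cons_self (a := b) (l := l))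
      have hsum : b + l.sum = n + 1 := by
        have := c.blocks_sum; rw [h] at this; simpa using this
      ⟨⟨b - 1, by omega⟩,
       ⟨l, fun hi => c.blocks_pos (h ▸ List.mem_cons_of_mem b hi), by simp; omega⟩⟩

def compEquiv (n : ℕ) : Composition (n + 1) ≃ Σ i : Fin (n + 1), Composition (n - i) where
  toFun := compSplit n
  invFun p := compCons n p.1 p.2
  left_inv c := by
    rcases c with ⟨blocks, hpos, hsum⟩
    cases blocks with
    | nil => simp at hsum
    | cons b l =>
        have hb : 0 < b := hpos (List.mem_cons_self (a := b) (l := l))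
        simp only [compSplit, compCons, Composition.ext_iff]
        simp; omega
  right_inv p := by
    rcases p with ⟨i, c⟩
    simp only [compSplit, compCons]
    congr 1

def G : ℕ → ℕ
  | 0 => 1
  | n + 1 => Nat.fib (2 * n)

lemma sumG (n : ℕ) : ∑ m ∈ range (n + 2), G m = Nat.fib (2 * n + 1) := by
  induction n with
  | zero => rfl
  | succ k ih =>
      rw [sum_range_succ, ih]
      have hG : G (k + 2) = Nat.fib (2 * k + 2) := by
        show Nat.fib (2 * (k + 1)) = _
        have : 2 * (k + 1) = 2 * k + 2 := by ring
        rw [this]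
      have h4 : Nat.fib (2 * k + 3) = Nat.fib (2 * k + 1) + Nat.fib (2 * k + 2) :=
        Nat.fib_add_two
      have e2 : 2 * (k + 1) + 1 = 2 * k + 3 := by ring
      rw [hG, e2]
      omega

lemma key2 (n : ℕ) :
    ∑ i ∈ range (n + 2), (2 ^ i - 1) * G (n + 1 - i) = Nat.fib (2 * n + 2) := by
  induction n with
  | zero => simp [G, sum_range_succ]
  | succ k ih =>
      rw [Finset.sum_range_succ']
      have h1 : ∀ i ∈ range (k + 2),
          (2 ^ (i + 1) - 1) * G (k + 1 + 1 - (i + 1)) =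
          2 * ((2 ^ i - 1) * G (k + 1 - i)) + G (k + 1 - i) := by
        intro i _
        have : (2:ℕ) ^ (i+1) - 1 = 2 * (2 ^ i - 1) + 1 := by
          have : (1:ℕ) ≤ 2 ^ i := Nat.one_le_two_pow
          rw [pow_succ]; omega
        rw [show k + 1 + 1 - (i + 1) = k + 1 - i by omega, this]; ring
      rw [Finset.sum_congr rfl h1, Finset.sum_add_distrib, ← Finset.mul_sum, ih]
      have h2 : ∑ i ∈ range (k + 2), G (k + 1 - i) = ∑ m ∈ range (k + 2), G m := by
        have := Finset.sum_range_reflect (fun j => G j) (k + 2)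
        simpa using this
      rw [h2, sumG]
      simp only [pow_zero, Nat.sub_self, zero_mul, add_zero]
      have h3 : Nat.fib (2 * k + 2) = Nat.fib (2 * k) + Nat.fib (2 * k + 1) :=
        Nat.fib_add_two
      have h4 : Nat.fib (2 * k + 3) = Nat.fib (2 * k + 1) + Nat.fib (2 * k + 2) :=
        Nat.fib_add_two
      have h5 : Nat.fib (2 * k + 4) = Nat.fib (2 * k + 2) + Nat.fib (2 * k + 3) :=
        Nat.fib_add_two
      have e1 : 2 * (k + 1) + 2 = 2 * k + 4 := by ring
      rw [e1]
      omega

lemma sum_comp : ∀ n, G n = ∑ c : Composition n, (c.blocks.map fun a => 2 ^ (a - 1) - 1).prod := by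
  intro n
  induction n using Nat.strong_induction_on with
  | _ n ih =>
    match n with
    | 0 =>
        have huniq : ∀ c : Composition 0, c.blocks = [] := by
          intro c
          cases hb : c.blocks with
          | nil => rfl
          | cons b l =>
              have hpos : 0 < b := c.blocks_pos (hb ▸ List.mem_cons_self (a := b) (l := l))
              have := c.blocks_sum
              rw [hb] at this; simp at this; omega
        have : ∀ c : Composition 0,
            (c.blocks.map fun a => 2 ^ (a - 1) - 1).prod = 1 := by
          intro c; rw [huniq c]; simp
        rw [Finset.sum_congr rfl (fun c _ => this c)]
        simp [G, composition_card]
    | m + 1 =>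
        rw [← Equiv.sum_comp (compEquiv m).symm]
        rw [← Finset.univ_sigma_univ, Finset.sum_sigma]
        have : ∀ i : Fin (m + 1),
            ∑ c : Composition (m - i),
              ((((compEquiv m).symm ⟨i, c⟩).blocks.map fun a => 2 ^ (a - 1) - 1).prod)
            = (2 ^ (i : ℕ) - 1) * ∑ c : Composition (m - i),
                (c.blocks.map fun a => 2 ^ (a - 1) - 1).prod := by
          intro i
          rw [Finset.mul_sum]
          refine Finset.sum_congr rfl fun c _ => ?_
          show ((compCons m i c).blocks.map fun a => 2 ^ (a - 1) - 1).prod = _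
          simp [compCons]
        rw [Finset.sum_congr rfl (fun i _ => this i)]
        have hT : ∀ i : Fin (m + 1),
            (∑ c : Composition (m - i), (c.blocks.map fun a => 2 ^ (a - 1) - 1).prod)
            = G (m - i) := fun i => (ih (m - i) (by omega)).symm
        rw [Finset.sum_congr rfl (fun i _ => by rw [hT i])]
        rw [Fin.sum_univ_eq_sum_range (fun i => (2 ^ i - 1) * G (m - i))]
        match m with
        | 0 => simp [G]
        | k + 1 =>
            rw [key2 k]
            show _ = G (k + 2)
            have e : 2 * (k + 1) = 2 * k + 2 := by ring
            simp [G, e]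

theorem fib_two_mul_sub_two_eq_sum_compositions (n : ℕ) (hn : 1 ≤ n) :
    Nat.fib (2 * n - 2) =
      ∑ c : Composition n, (c.blocks.map fun a => 2 ^ (a - 1) - 1).prod := by
  rw [← sum_comp]
  match n, hn with
  | m + 1, _ =>
      show Nat.fib (2 * (m + 1) - 2) = Nat.fib (2 * m)
      have : 2 * (m + 1) - 2 = 2 * m := by omega
      rw [this]
end

section
/- For every integer n ≥ 0, F_{2n+1} equals the sum, over all compositions (a_1, …, a_k) of n, of 2^{#{i : a_i = 1}}, where #{i : a_i = 1} is the number of parts of the composition equal to 1. -/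
open Finset

/-- Weighted count of compositions: `2 ^ (number of parts equal to 1)`. -/
noncomputable def S (n : ℕ) : ℕ := ∑ c : Composition n, 2 ^ (c.blocks.count 1)

lemma comp_blocks_ne_nil {n : ℕ} (c : Composition (n + 1)) : c.blocks ≠ [] := by
  intro h
  have := c.blocks_sum
  rw [h] at this
  simp at this

lemma comp_headI_pos {n : ℕ} (c : Composition (n + 1)) : 0 < c.blocks.headI := by
  rcases hb : c.blocks with _ | ⟨x, l⟩
  · exact absurd hb (comp_blocks_ne_nil c)
  · exact hb ▸ c.blocks_pos (hb ▸ (List.mem_cons_self : x ∈ x :: l))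

lemma comp_cons {n : ℕ} (c : Composition (n + 1)) :
    c.blocks = c.blocks.headI :: c.blocks.tail := by
  rcases hb : c.blocks with _ | ⟨x, l⟩
  · exact absurd hb (comp_blocks_ne_nil c)
  · simp

lemma comp_headI_le {n : ℕ} (c : Composition (n + 1)) : c.blocks.headI ≤ n + 1 := by
  have hs := c.blocks_sum
  rw [comp_cons c] at hs
  simp only [List.sum_cons] at hs
  omega

lemma S_zero : S 0 = 1 := by
  have h : ∀ c : Composition 0, 2 ^ (c.blocks.count 1) = 1 := by
    intro c
    have hb : c.blocks = [] := by
      have hs := c.blocks_sum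
      cases hb : c.blocks with
      | nil => rfl
      | cons a l =>
        have ha : 0 < a := c.blocks_pos (hb ▸ (List.mem_cons_self : a ∈ a :: l))
        rw [hb] at hs
        simp only [List.sum_cons] at hs
        omega
    simp [hb]
  unfold S
  rw [Finset.sum_congr rfl (fun c _ => h c)]
  simp only [Finset.sum_const, Finset.card_univ, smul_eq_mul, mul_one]
  rw [composition_card]
  norm_num

lemma S_succ (n : ℕ) :
    S (n + 1) = ∑ a ∈ range (n + 1), (if a = 0 then 2 else 1) * S (n - a) := by
  classical
  unfold S
  rw [← Finset.sum_fiberwise_of_maps_to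
      (g := fun c : Composition (n + 1) => c.blocks.headI - 1) (t := range (n + 1))
      (fun c _ => by
        have := comp_headI_le c
        simp only [Finset.mem_range]
        omega)]
  refine Finset.sum_congr rfl (fun a ha => ?_)
  have haa : a ≤ n := Nat.lt_succ_iff.mp (mem_range.mp ha)
  rw [show (if a = 0 then 2 else 1) * ∑ c : Composition (n - a), 2 ^ (c.blocks.count 1)
      = ∑ d : Composition (n - a), (if a = 0 then 2 else 1) * 2 ^ (d.blocks.count 1) by
    rw [Finset.mul_sum]]
  refine Finset.sum_bij'
    (i := fun c hc => Composition.mk c.blocks.tail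
      (fun hi => c.blocks_pos (List.mem_of_mem_tail hi))
      (by
        have hmem := (Finset.mem_filter.mp hc).2
        have hpos := comp_headI_pos c
        have hhead : c.blocks.headI = a + 1 := by omega
        have hs := c.blocks_sum
        rw [comp_cons c] at hs
        simp only [List.sum_cons, hhead] at hs
        omega))
    (j := fun d hd => Composition.mk ((a + 1) :: d.blocks)
      (fun hi => by
        rcases List.mem_cons.mp hi with h | h
        · omega
        · exact d.blocks_pos h)
      (by
        simp only [List.sum_cons, d.blocks_sum]
        omega))
    ?_ ?_ ?_ ?_ ?_
  · intro c hc
    exact Finset.mem_univ _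
  · intro d hd
    refine Finset.mem_filter.mpr ⟨Finset.mem_univ _, ?_⟩
    simp
  · intro c hc
    have hmem := (Finset.mem_filter.mp hc).2
    have hpos := comp_headI_pos c
    have hhead : c.blocks.headI = a + 1 := by omega
    apply Composition.ext
    simp only
    rw [← hhead]
    exact (comp_cons c).symm
  · intro d hd
    apply Composition.ext
    simp
  · intro c hc
    have hmem := (Finset.mem_filter.mp hc).2
    have hpos := comp_headI_pos c
    have hhead : c.blocks.headI = a + 1 := by omega
    have hcount : c.blocks.count 1 = ((a + 1) :: c.blocks.tail).count 1 := by
      conv_lhs => rw [comp_cons c, hhead]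
    rw [hcount]
    rcases Nat.eq_zero_or_pos a with rfl | hapos
    · simp [List.count_cons, pow_succ, mul_comm]
    · have h1 : a + 1 ≠ 1 := by omega
      have h0 : a ≠ 0 := by omega
      simp [List.count_cons, h1, h0]

lemma fib_odd_sum (m : ℕ) : ∑ k ∈ range m, Nat.fib (2 * k + 1) = Nat.fib (2 * m) := by
  induction m with
  | zero => simp
  | succ m ih =>
    rw [Finset.sum_range_succ, ih, show 2 * (m + 1) = 2 * m + 1 + 1 by ring,
      Nat.fib_add_two]

lemma S_eq_fib (n : ℕ) : S n = Nat.fib (2 * n + 1) := by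
  induction n using Nat.strong_induction_on with
  | _ n ih =>
    match n with
    | 0 => simpa using S_zero
    | Nat.succ m =>
      rw [S_succ m]
      have hsum : ∑ a ∈ range (m + 1), (if a = 0 then 2 else 1) * S (m - a)
          = 2 * S m + ∑ a ∈ range m, S (m - (a + 1)) := by
        rw [Finset.sum_range_succ']
        simp only [Nat.sub_zero, if_pos rfl]
        have : ∀ a ∈ range m, (if a + 1 = 0 then 2 else 1) * S (m - (a + 1))
            = S (m - (a + 1)) := by
          intro a _
          simp
        rw [Finset.sum_congr rfl this]
        simp only [if_true]
        omega
      rw [hsum]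
      have h1 : S m = Nat.fib (2 * m + 1) := ih m (Nat.lt_succ_self m)
      have h2 : ∀ a ∈ range m, S (m - (a + 1)) = Nat.fib (2 * (m - (a + 1)) + 1) := by
        intro a ha
        exact ih _ (by omega)
      rw [h1, Finset.sum_congr rfl h2]
      have h3 : ∑ a ∈ range m, Nat.fib (2 * (m - (a + 1)) + 1)
          = ∑ k ∈ range m, Nat.fib (2 * k + 1) := by
        rw [← Finset.sum_range_reflect]
        refine Finset.sum_congr rfl (fun j hj => ?_)
        have hj' := Finset.mem_range.mp hj
        congr 2
        omega
      rw [h3, fib_odd_sum]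
      have e1 : Nat.fib (2 * (m + 1) + 1)
          = Nat.fib (2 * m + 1) + Nat.fib (2 * m + 1 + 1) := by
        rw [show 2 * (m + 1) + 1 = 2 * m + 1 + 2 by ring, Nat.fib_add_two]
      have e2 : Nat.fib (2 * m + 1 + 1) = Nat.fib (2 * m + 1) + Nat.fib (2 * m) := by
        rw [show 2 * m + 1 + 1 = 2 * m + 2 by ring, Nat.fib_add_two]
        omega
      simp only [Nat.succ_eq_add_one] at *
      omega

theorem fib_two_mul_add_one_eq_sum_compositions (n : ℕ) :
    Nat.fib (2 * n + 1) = ∑ c : Composition n, 2 ^ (c.blocks.count 1) := by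
  rw [← S, S_eq_fib]
end

section
/- For every integer n ≥ 3, 2^{n−3} equals the sum, over all compositions (a_1, …, a_k) of n, of the products (F_{a_1} − 1)(F_{a_2} − 1) ⋯ (F_{a_k} − 1). -/
open Finset

lemma my_headI_mem {l : List ℕ} (h : l ≠ []) : l.headI ∈ l := by
  cases l with
  | nil => exact absurd rfl h
  | cons a t => simp

lemma my_headI_cons_tail (l : List ℕ) (h : l ≠ []) : l.headI :: l.tail = l := by
  cases l with
  | nil => exact absurd rfl h
  | cons a t => rfl

lemma comp_heq {i j : ℕ} (h : i = j) {c : Composition i} {d : Composition j}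
    (hb : c.blocks = d.blocks) : HEq c d := by
  subst h
  exact heq_of_eq (Composition.ext hb)

/-- Peel off the first block of a composition of `n+1`. -/
def compPeelEquiv (n : ℕ) : Composition (n + 1) ≃ Σ i : Fin (n + 1), Composition i where
  toFun c := by
    refine ⟨⟨n + 1 - c.blocks.headI, ?_⟩, ⟨c.blocks.tail, ?_, ?_⟩⟩
    · have hne : c.blocks ≠ [] := by
        intro h
        have := c.blocks_sum
        rw [h] at this
        simp at this
      have hpos : 0 < c.blocks.headI := c.blocks_pos (my_headI_mem hne)
      omega
    · intro i hi
      exact c.blocks_pos (List.mem_of_mem_tail hi)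
    · have hne : c.blocks ≠ [] := by
        intro h
        have := c.blocks_sum
        rw [h] at this
        simp at this
      have hs := c.blocks_sum
      rw [← my_headI_cons_tail c.blocks hne, List.sum_cons] at hs
      show c.blocks.tail.sum = n + 1 - c.blocks.headI
      omega
  invFun p := ⟨(n + 1 - p.1.1) :: p.2.blocks, by
      intro i hi
      rcases List.mem_cons.1 hi with h | h
      · subst h; have := p.1.2; omega
      · exact p.2.blocks_pos h, by
      simp only [List.sum_cons, p.2.blocks_sum]
      have := p.1.2
      omega⟩
  left_inv c := by
    have hne : c.blocks ≠ [] := by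
      intro h
      have := c.blocks_sum
      rw [h] at this
      simp at this
    have hpos : 0 < c.blocks.headI := c.blocks_pos (my_headI_mem hne)
    have hle : c.blocks.headI ≤ n + 1 := by
      have hs := c.blocks_sum
      rw [← my_headI_cons_tail c.blocks hne, List.sum_cons] at hs
      omega
    apply Composition.ext
    show (n + 1 - (n + 1 - c.blocks.headI)) :: c.blocks.tail = c.blocks
    rw [show n + 1 - (n + 1 - c.blocks.headI) = c.blocks.headI by omega]
    exact my_headI_cons_tail c.blocks hne
  right_inv p := by
    rcases p with ⟨⟨i, hi⟩, c⟩
    have h1 : n + 1 - (((n + 1 - i) :: c.blocks).headI) = i := by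
      simp only [List.headI_cons]
      omega
    exact Sigma.ext (Fin.ext (by simpa using h1)) (comp_heq (by simpa using h1) rfl)

/-- Total sum over compositions. -/
def Tsum (n : ℕ) : ℕ := ∑ c : Composition n, (c.blocks.map fun a => Nat.fib a - 1).prod

lemma Tsum_zero : Tsum 0 = 1 := by
  rw [Tsum]
  have h : ∀ c : Composition 0, (c.blocks.map fun a => Nat.fib a - 1).prod = 1 := by
    intro c
    have hb : c.blocks = [] := by
      have hs := c.blocks_sum
      cases h : c.blocks with
      | nil => rfl
      | cons a l =>
        exfalso
        have := c.blocks_pos (by rw [h]; exact List.mem_cons_self (a := a) (l := l))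
        rw [h] at hs
        simp only [List.sum_cons] at hs
        omega
    rw [hb]; rfl
  rw [Finset.sum_congr rfl fun c _ => h c]
  simp [composition_card]

lemma Tsum_succ (n : ℕ) :
    Tsum (n + 1) = ∑ i ∈ range (n + 1), (Nat.fib (n + 1 - i) - 1) * Tsum i := by
  rw [Tsum]
  rw [← Equiv.sum_comp (compPeelEquiv n).symm
    (fun c : Composition (n+1) => (c.blocks.map fun a => Nat.fib a - 1).prod)]
  rw [← Finset.univ_sigma_univ, Finset.sum_sigma]
  rw [← Fin.sum_univ_eq_sum_range (fun i => (Nat.fib (n + 1 - i) - 1) * Tsum i)]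
  apply Finset.sum_congr rfl
  intro i _
  rw [Tsum, Finset.mul_sum]
  apply Finset.sum_congr rfl
  intro c _
  simp [compPeelEquiv]

/-- Key Fibonacci identity. -/
lemma Gsum (m : ℕ) :
    (∑ j ∈ range m, (Nat.fib (m - j) - 1) * 2 ^ j) + Nat.fib (m + 3) = 2 ^ m + 1 := by
  induction m with
  | zero => simp; decide
  | succ m ih =>
    rw [Finset.sum_range_succ']
    have h1 : ∀ j ∈ range m, (Nat.fib (m + 1 - (j+1)) - 1) * 2 ^ (j+1)
        = 2 * ((Nat.fib (m - j) - 1) * 2 ^ j) := by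
      intro j hj
      rw [show m + 1 - (j+1) = m - j by omega]
      ring
    rw [Finset.sum_congr rfl h1, ← Finset.mul_sum]
    simp only [Nat.sub_zero, pow_zero, mul_one]
    have e1 : Nat.fib (m + 1 + 3) = Nat.fib (m + 2) + Nat.fib (m + 3) := by
      rw [show m + 1 + 3 = (m + 2) + 2 by omega]
      exact Nat.fib_add_two
    have e2 : Nat.fib (m + 3) = Nat.fib (m + 1) + Nat.fib (m + 2) := by
      rw [show m + 3 = (m + 1) + 2 by omega]
      exact Nat.fib_add_two
    have hp : (2:ℕ) ^ (m + 1) = 2 ^ m * 2 := pow_succ 2 m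
    have hq : 1 ≤ Nat.fib (m + 1) := Nat.fib_pos.2 (by omega)
    omega

lemma Tsum_eq (n : ℕ) :
    Tsum n = if n = 0 then 1 else if n ≤ 2 then 0 else 2 ^ (n - 3) := by
  induction n using Nat.strong_induction_on with
  | _ n ih =>
    match n with
    | 0 => simpa using Tsum_zero
    | 1 =>
      rw [Tsum_succ]
      simp [Tsum_zero]
    | 2 =>
      rw [Tsum_succ]
      rw [Finset.sum_range_succ, Finset.sum_range_one]
      rw [ih 0 (by omega), ih 1 (by omega)]
      simp
    | (m + 3) =>
      rw [Tsum_succ]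
      have hR : (if m + 3 = 0 then (1:ℕ) else if m + 3 ≤ 2 then 0 else 2 ^ (m + 3 - 3))
          = 2 ^ m := by
        rw [if_neg (by omega), if_neg (by omega), Nat.add_sub_cancel]
      rw [hR]
      have hrw : ∀ i ∈ range (m + 3), (Nat.fib (m + 3 - i) - 1) * Tsum i
          = (Nat.fib (m + 3 - i) - 1) *
            (if i = 0 then 1 else if i ≤ 2 then 0 else 2 ^ (i - 3)) := by
        intro i hi
        rw [ih i (by simp at hi; omega)]
      rw [Finset.sum_congr rfl hrw]
      rw [Finset.sum_range_succ', Finset.sum_range_succ', Finset.sum_range_succ']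
      have h1 : ∀ j ∈ range m, (Nat.fib (m + 3 - (j + 1 + 1 + 1)) - 1) *
          (if j + 1 + 1 + 1 = 0 then 1 else if j + 1 + 1 + 1 ≤ 2 then 0 else 2 ^ (j + 1 + 1 + 1 - 3))
          = (Nat.fib (m - j) - 1) * 2 ^ j := by
        intro j hj
        rw [show m + 3 - (j + 1 + 1 + 1) = m - j by omega, if_neg (by omega), if_neg (by omega),
          show j + 1 + 1 + 1 - 3 = j by omega]
      rw [Finset.sum_congr rfl h1]
      norm_num
      have hG := Gsum m
      have hfib : 1 ≤ Nat.fib (m + 3) := Nat.fib_pos.2 (by omega)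
      omega

theorem two_pow_eq_sum_compositions_fib_sub_one (n : ℕ) (hn : 3 ≤ n) :
    2 ^ (n - 3) =
      ∑ c : Composition n, (c.blocks.map fun a => Nat.fib a - 1).prod := by
  have h := Tsum_eq n
  rw [if_neg (by omega), if_neg (by omega)] at h
  rw [← h, Tsum]
end
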